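/- Fix integers q ≥ 2, r ≥ 2 and β > 0. Suppose there exists u ∈ (0,1] such that u < (1 − e^{Δ(u)})/(1 + (q−1)e^{Δ(u)}), where Δ(u) = −(β/q^{r−1})[(1 + (q−1)u)^{r−1} − (1−u)^{r−1}]. Then there exists z ∈ P with z₁ > 1/q and g₁^r(z) > z₁; in particular β ≥ β_s(q,r). (This is the content of the inequality β_s(q,r) ≤ β_c(q,r), since for every β above the critical value β_c(q,r) such a u exists.) -/
import Mathlib


noncomputable section

/-- The probability simplex in `ℝ^q`. -/
def simplexP (q : ℕ) : Set (Fin q → ℝ) :=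
  {ν | (∀ k, 0 ≤ ν k) ∧ ∑ k, ν k = 1}

/-- `g_k^r(z) = e^{β z_k^{r−1}} / Σ_j e^{β z_j^{r−1}}` for the generalized
Curie–Weiss–Potts model. -/
def gGCWP (q r : ℕ) (β : ℝ) (z : Fin q → ℝ) (k : Fin q) : ℝ :=
  Real.exp (β * z k ^ (r - 1)) / ∑ j : Fin q, Real.exp (β * z j ^ (r - 1))

/-- The rapid mixing threshold
`β_s(q,r) = sup{β ≥ 0 : g_k^r(z) < z_k for all z ∈ P and k with z_k ∈ (1/q,1]}`. -/
def betaS (q r : ℕ) : ℝ :=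
  sSup {b : ℝ | 0 ≤ b ∧ ∀ z ∈ simplexP q, ∀ k : Fin q,
    z k ∈ Set.Ioc (1 / (q : ℝ)) 1 → gGCWP q r b z k < z k}

/-- `Δ(u) = −(β/q^{r−1})[(1 + (q−1)u)^{r−1} − (1−u)^{r−1}]`. -/
def deltaGCWP (q r : ℕ) (β u : ℝ) : ℝ :=
  -(β / (q : ℝ) ^ (r - 1)) * ((1 + ((q : ℝ) - 1) * u) ^ (r - 1) - (1 - u) ^ (r - 1))

set_option maxHeartbeats 1000000 in
/-- **`β_s(q,r) ≤ β_c(q,r)`** (Lemma 7.2 in the survey).  If there is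
`u ∈ (0,1]` with `u < (1 − e^{Δ(u)})/(1 + (q−1)e^{Δ(u)})`, then there exists
`z ∈ P` with `z₁ > 1/q` and `g₁^r(z) > z₁`; in particular `β ≥ β_s(q,r)`. -/
theorem gcwp_betaS_le_betaC (q r : ℕ) (hq : 2 ≤ q) (hr : 2 ≤ r)
    (β : ℝ) (hβ : 0 < β) (u : ℝ) (hu : u ∈ Set.Ioc (0 : ℝ) 1)
    (hineq : u < (1 - Real.exp (deltaGCWP q r β u)) /
      (1 + ((q : ℝ) - 1) * Real.exp (deltaGCWP q r β u))) :
    (∃ z ∈ simplexP q,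
      1 / (q : ℝ) < z (⟨0, by omega⟩ : Fin q) ∧
      z (⟨0, by omega⟩ : Fin q) < gGCWP q r β z (⟨0, by omega⟩ : Fin q)) ∧
    betaS q r ≤ β := by
  obtain ⟨hu0, hu1⟩ := hu
  have hq1 : (1:ℝ) ≤ (q:ℝ) - 1 := by
    have : (2:ℝ) ≤ (q:ℝ) := by exact_mod_cast hq
    linarith
  have hqpos : (0:ℝ) < (q:ℝ) := by linarith
  set k0 : Fin q := ⟨0, by omega⟩ with hk0
  set a : ℝ := (1 + ((q:ℝ)-1)*u)/q with ha
  set b : ℝ := (1-u)/q with hbdef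
  set z : Fin q → ℝ := fun j => if j = k0 then a else b with hzdef
  clear_value z a b k0
  have hb0 : 0 ≤ b := by
    rw [hbdef]; apply div_nonneg _ hqpos.le; linarith
  have hba : b < a := by
    rw [ha, hbdef, div_lt_div_iff₀ hqpos hqpos]
    nlinarith [mul_pos (mul_pos hu0 hqpos) hqpos]
  have ha0 : 0 ≤ a := hb0.trans hba.le
  have ha_gt : 1/(q:ℝ) < a := by
    rw [ha, div_lt_div_iff₀ hqpos hqpos]
    nlinarith [mul_pos (mul_pos (show (0:ℝ) < (q:ℝ)-1 by linarith) hu0) hqpos]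
  have ha_le1 : a ≤ 1 := by
    rw [ha, div_le_one hqpos]; nlinarith
  have hzk0 : z k0 = a := by simp [hzdef]
  have hmem : z ∈ simplexP q := by
    constructor
    · intro k
      by_cases h : k = k0
      · simpa [hzdef, h] using ha0
      · simpa [hzdef, h] using hb0
    · have h1 : ∀ j : Fin q, z j = b + (if j = k0 then a - b else 0) := by
        intro j; by_cases h : j = k0 <;> simp [hzdef, h]
      have : ∑ k : Fin q, z k = a + ((q:ℝ)-1)*b := by
        simp only [h1, Finset.sum_add_distrib, Finset.sum_const, Finset.sum_ite_eq',
          Finset.mem_univ, if_true, Finset.card_univ, Fintype.card_fin, nsmul_eq_mul]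
        ring
      rw [this, ha, hbdef]
      field_simp
      ring
  set A : ℝ := a ^ (r-1) with hA
  set B : ℝ := b ^ (r-1) with hB
  clear_value A B
  have hBA : B < A := by
    rw [hA, hB]; exact pow_lt_pow_left₀ hba hb0 (by omega)
  have hDelta : deltaGCWP q r β u = β * B - β * A := by
    rw [deltaGCWP, hA, hB, ha, hbdef, div_pow, div_pow]
    have hqr : (0:ℝ) < (q:ℝ) ^ (r-1) := by positivity
    field_simp
    ring
  have hsum : ∀ t : ℝ, ∑ j : Fin q, Real.exp (t * z j ^ (r-1))
      = Real.exp (t*A) + ((q:ℝ)-1) * Real.exp (t*B) := by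
    intro t
    have h1 : ∀ j : Fin q, Real.exp (t * z j ^ (r-1))
        = Real.exp (t*B) + (if j = k0 then Real.exp (t*A) - Real.exp (t*B) else 0) := by
      intro j
      by_cases h : j = k0
      · have : z j = a := by simp [hzdef, h]
        rw [this, ← hA, if_pos h]; ring
      · have : z j = b := by simp [hzdef, h]
        rw [this, ← hB, if_neg h]; ring
    simp only [h1, Finset.sum_add_distrib, Finset.sum_const, Finset.sum_ite_eq',
      Finset.mem_univ, if_true, Finset.card_univ, Fintype.card_fin, nsmul_eq_mul]
    ring
  have hSpos : ∀ t : ℝ, 0 < Real.exp (t*A) + ((q:ℝ)-1) * Real.exp (t*B) := by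
    intro t
    have h1 := Real.exp_pos (t*A)
    have h2 := Real.exp_pos (t*B)
    nlinarith
  have gform : ∀ t : ℝ, gGCWP q r t z k0
      = Real.exp (t*A) / (Real.exp (t*A) + ((q:ℝ)-1) * Real.exp (t*B)) := by
    intro t
    unfold gGCWP
    rw [hsum t, hzk0, ← hA]
  -- main inequality at β
  set E : ℝ := Real.exp (deltaGCWP q r β u) with hE
  clear_value E
  have hEpos : 0 < E := hE ▸ Real.exp_pos _
  have hDpos : 0 < 1 + ((q:ℝ)-1)*E := by nlinarith
  have huD : u * (1 + ((q:ℝ)-1)*E) < 1 - E := (lt_div_iff₀ hDpos).mp hineq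
  have hexpB : Real.exp (β*B) = Real.exp (β*A) * E := by
    rw [hE, hDelta, ← Real.exp_add]; ring_nf
  have haD : a * (1 + ((q:ℝ)-1)*E) < 1 := by
    rw [ha, div_mul_eq_mul_div, div_lt_one hqpos]
    nlinarith [mul_lt_mul_of_pos_left huD (show (0:ℝ) < (q:ℝ)-1 by linarith)]
  have hmain : a < gGCWP q r β z k0 := by
    rw [gform β, lt_div_iff₀ (hSpos β)]
    have hX : 0 < Real.exp (β*A) := Real.exp_pos _
    rw [hexpB]
    nlinarith [mul_lt_mul_of_pos_right haD hX]
  refine ⟨⟨z, hmem, ?_, ?_⟩, ?_⟩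
  · rw [hzk0]; exact ha_gt
  · rw [hzk0]; exact hmain
  -- betaS ≤ β
  apply Real.sSup_le _ hβ.le
  rintro t ⟨ht0, hball⟩
  by_contra hlt
  push_neg at hlt
  have hg : gGCWP q r t z k0 < a := by
    have := hball z hmem k0 ⟨by rw [hzk0]; exact ha_gt, by rw [hzk0]; exact ha_le1⟩
    rwa [hzk0] at this
  have hmono : gGCWP q r β z k0 ≤ gGCWP q r t z k0 := by
    rw [gform β, gform t, div_le_div_iff₀ (hSpos β) (hSpos t)]
    have h1 : Real.exp (β*A) * Real.exp (t*B) ≤ Real.exp (t*A) * Real.exp (β*B) := by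
      rw [← Real.exp_add, ← Real.exp_add]
      apply Real.exp_le_exp.mpr
      nlinarith [mul_nonneg (sub_nonneg.mpr hlt.le) (sub_nonneg.mpr hBA.le)]
    have h2 := mul_le_mul_of_nonneg_left h1 (show (0:ℝ) ≤ (q:ℝ)-1 by linarith)
    nlinarith [h2]
  linarith

end
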